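/- arXiv:2602.10430 — 3 statements merged into one kernel-verified Lean document; each statement's English description precedes it below -/
import Mathlib

section
/- Consider a finite probability space with outcomes i = 1,…,n having probabilities p_i > 0 and rewards R_i. For κ ∈ (0,1], the linear program max Σ w_i p_i R_i subject to 0 ≤ w_i ≤ 1/κ and Σ w_i p_i = 1 has an optimal solution of hard-threshold form: there exists a threshold λ such that w_i* = 1/κ for outcomes with R_i > λ, w_i* = 0 for outcomes with R_i < λ, and the optimal value equals the conditional expectation of R over the top-κ mass of the distribution (the optimistic CVaR at level κ). -/
open Finset

/-- the optimistic-DRO linear program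
`max Σ wᵢ pᵢ Rᵢ  s.t.  0 ≤ wᵢ ≤ 1/κ, Σ wᵢ pᵢ = 1`
on a finite probability space admits an optimal solution of hard-threshold
form: `w* = 1/κ` above a threshold `λ`, `w* = 0` below it, and its value is the
optimistic CVaR at level `κ` (the Rockafellar–Uryasev expression at `λ`). -/
theorem optimistic_dro_hard_threshold {n : ℕ}
    (p R : Fin n → ℝ) (hp : ∀ i, 0 < p i) (hsum : ∑ i, p i = 1)
    (κ : ℝ) (hκ0 : 0 < κ) (hκ1 : κ ≤ 1) :
    ∃ (w : Fin n → ℝ) (lam : ℝ),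
      (∀ i, 0 ≤ w i ∧ w i ≤ 1 / κ) ∧
      (∑ i, w i * p i = 1) ∧
      (∀ v : Fin n → ℝ, (∀ i, 0 ≤ v i ∧ v i ≤ 1 / κ) → (∑ i, v i * p i = 1) →
        ∑ i, v i * p i * R i ≤ ∑ i, w i * p i * R i) ∧
      (∀ i, lam < R i → w i = 1 / κ) ∧
      (∀ i, R i < lam → w i = 0) ∧
      (∑ i, w i * p i * R i = lam + (1 / κ) * ∑ i, p i * max (R i - lam) 0) := by
  cases n with
  | zero => simp at hsum
  | succ m =>
  have hne : (univ : Finset (Fin (m+1))).Nonempty := univ_nonempty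
  set s : Finset ℝ := (univ.image R).filter
      (fun t => κ ≤ ∑ i ∈ univ.filter (fun i => t ≤ R i), p i) with hs
  have hsne : s.Nonempty := by
    obtain ⟨j, -, hj⟩ := exists_min_image univ R hne
    refine ⟨R j, ?_⟩
    rw [hs, mem_filter]
    constructor
    · exact mem_image_of_mem R (mem_univ j)
    · have : univ.filter (fun i => R j ≤ R i) = univ := by
        apply filter_true_of_mem
        intro i _; exact hj i (mem_univ i)
      rw [this, hsum]; exact hκ1
  set lam : ℝ := s.max' hsne with hlam
  have hlmem : lam ∈ s := s.max'_mem hsne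
  rw [hs, mem_filter] at hlmem
  obtain ⟨hlimg, hlsum⟩ := hlmem
  set A : Finset (Fin (m+1)) := univ.filter (fun i => lam < R i) with hA
  set B : Finset (Fin (m+1)) := univ.filter (fun i => R i = lam) with hB
  set a : ℝ := ∑ i ∈ A, p i with ha
  set b : ℝ := ∑ i ∈ B, p i with hb
  -- a ≤ κ
  have haκ : a ≤ κ := by
    by_cases hAne : A.Nonempty
    · set T2 : Finset ℝ := A.image R with hT2
      have hT2ne : T2.Nonempty := hAne.image R
      set t' : ℝ := T2.min' hT2ne with ht'
      have ht'mem : t' ∈ T2 := T2.min'_mem hT2ne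
      obtain ⟨j, hjA, hjR⟩ := mem_image.mp ht'mem
      have hjlt : lam < R j := (mem_filter.mp hjA).2
      have ht'lt : lam < t' := hjR ▸ hjlt
      have ht'ns : t' ∉ s := by
        intro hmem
        exact absurd (s.le_max' t' hmem) (not_le.mpr ht'lt)
      have ht'img : t' ∈ univ.image R := hjR ▸ mem_image_of_mem R (mem_univ j)
      have hlt : ∑ i ∈ univ.filter (fun i => t' ≤ R i), p i < κ := by
        by_contra hcon
        exact ht'ns (by rw [hs, mem_filter]; exact ⟨ht'img, not_lt.mp (by simpa using hcon)⟩)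
      have hsub : A ⊆ univ.filter (fun i => t' ≤ R i) := by
        intro i hi
        rw [mem_filter]
        refine ⟨mem_univ i, ?_⟩
        exact T2.min'_le (R i) (mem_image_of_mem R hi)
      have : a ≤ ∑ i ∈ univ.filter (fun i => t' ≤ R i), p i :=
        sum_le_sum_of_subset_of_nonneg hsub (fun i _ _ => (hp i).le)
      linarith
    · rw [ha, not_nonempty_iff_eq_empty.mp hAne, sum_empty]; linarith
  -- κ ≤ a + b
  have hab : κ ≤ a + b := by
    have hsplit : univ.filter (fun i => lam ≤ R i) = A ∪ B := by
      ext i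
      simp only [hA, hB, mem_filter, mem_union, mem_univ, true_and]
      constructor
      · intro h
        rcases lt_or_eq_of_le h with h' | h'
        · exact Or.inl h'
        · exact Or.inr h'.symm
      · rintro (h | h)
        · exact h.le
        · exact h.ge
    have hdisj : Disjoint A B := by
      rw [disjoint_left]
      intro i hiA hiB
      rw [hA, mem_filter] at hiA
      rw [hB, mem_filter] at hiB
      exact absurd hiB.2 (ne_of_gt hiA.2)
    calc κ ≤ ∑ i ∈ univ.filter (fun i => lam ≤ R i), p i := hlsum
      _ = a + b := by rw [hsplit, sum_union hdisj]
  -- 0 < b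
  have hbpos : 0 < b := by
    obtain ⟨j, -, hjR⟩ := mem_image.mp hlimg
    have hjB : j ∈ B := by rw [hB, mem_filter]; exact ⟨mem_univ j, hjR⟩
    have : p j ≤ b := single_le_sum (fun i _ => (hp i).le) hjB
    linarith [hp j]
  set c : ℝ := (κ - a) / (κ * b) with hc
  have hc0 : 0 ≤ c := div_nonneg (by linarith) (by positivity)
  have hc1 : c ≤ 1 / κ := by
    rw [hc, div_le_div_iff₀ (by positivity) hκ0]
    nlinarith
  have hcb : c * b = (κ - a) / κ := by
    rw [hc]; field_simp
  -- weights
  set w : Fin (m+1) → ℝ := fun i => if lam < R i then 1/κ else if R i = lam then c else 0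
    with hw
  -- key sum lemma
  have key : ∀ f : Fin (m+1) → ℝ,
      ∑ i, w i * f i = (1/κ) * ∑ i ∈ A, f i + c * ∑ i ∈ B, f i := by
    intro f
    rw [← sum_filter_add_sum_filter_not univ (fun i => lam < R i) (fun i => w i * f i)]
    have h1 : ∑ i ∈ univ.filter (fun i => lam < R i), w i * f i = (1/κ) * ∑ i ∈ A, f i := by
      rw [mul_sum]
      apply sum_congr rfl
      intro i hi
      rw [mem_filter] at hi
      rw [hw]; simp only [if_pos hi.2]
    have h2 : ∑ i ∈ univ.filter (fun i => ¬ lam < R i), w i * f i = c * ∑ i ∈ B, f i := by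
      rw [← sum_filter_add_sum_filter_not (univ.filter (fun i => ¬ lam < R i))
        (fun i => R i = lam) (fun i => w i * f i)]
      have e1 : (univ.filter (fun i => ¬ lam < R i)).filter (fun i => R i = lam) = B := by
        ext i
        simp only [hB, mem_filter, mem_univ, true_and]
        constructor
        · exact fun h => h.2
        · exact fun h => ⟨not_lt.mpr h.le, h⟩
      have h3 : ∑ i ∈ (univ.filter (fun i => ¬ lam < R i)).filter
          (fun i => ¬ R i = lam), w i * f i = 0 := by
        apply sum_eq_zero
        intro i hi
        simp only [mem_filter] at hi
        rw [hw]; simp only [if_neg hi.1.2, if_neg hi.2, zero_mul]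
      rw [e1, h3, add_zero, mul_sum]
      apply sum_congr rfl
      intro i hi
      rw [hB, mem_filter] at hi
      rw [hw]; simp only [if_neg (not_lt.mpr hi.2.le), if_pos hi.2]
    rw [h1, h2]
  have hwp : ∑ i, w i * p i = 1 := by
    rw [key p, ← ha, ← hb, hcb]
    field_simp
    ring
  refine ⟨w, lam, ?_, hwp, ?_, ?_, ?_, ?_⟩
  · intro i
    rw [hw]
    by_cases h1 : lam < R i
    · simp only [if_pos h1]; exact ⟨by positivity, le_refl _⟩
    · by_cases h2 : R i = lam
      · simp only [if_neg h1, if_pos h2]; exact ⟨hc0, hc1⟩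
      · simp only [if_neg h1, if_neg h2]; exact ⟨le_refl 0, by positivity⟩
  · -- optimality
    intro v hv hvsum
    have hpt : ∀ i, 0 ≤ (w i - v i) * p i * (R i - lam) := by
      intro i
      rcases lt_trichotomy (R i) lam with h | h | h
      · have hwi : w i = 0 := by rw [hw]; simp [not_lt.mpr h.le, ne_of_lt h]
        rw [hwi]
        have h1 : 0 ≤ v i * p i * (lam - R i) :=
          mul_nonneg (mul_nonneg (hv i).1 (hp i).le) (by linarith)
        nlinarith [h1]
      · rw [h]; simp
      · have hwi : w i = 1/κ := by rw [hw]; simp [h]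
        rw [hwi]
        exact mul_nonneg (mul_nonneg (by linarith [(hv i).2]) (hp i).le) (by linarith)
    have hsum2 : 0 ≤ ∑ i, (w i - v i) * p i * (R i - lam) :=
      sum_nonneg (fun i _ => hpt i)
    have hexp : ∑ i, (w i - v i) * p i * (R i - lam) =
        (∑ i, w i * p i * R i) - (∑ i, v i * p i * R i)
        - lam * ((∑ i, w i * p i) - (∑ i, v i * p i)) := by
      rw [← sum_sub_distrib, ← sum_sub_distrib, mul_sum, ← sum_sub_distrib]
      exact sum_congr rfl (fun i _ => by ring)
    rw [hexp, hwp, hvsum] at hsum2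
    linarith
  · intro i h
    rw [hw]; simp [h]
  · intro i h
    rw [hw]; simp [not_lt.mpr h.le, ne_of_lt h]
  · -- value
    have hmax : ∑ i, p i * max (R i - lam) 0 = ∑ i ∈ A, (p i * R i) - lam * a := by
      rw [← sum_filter_add_sum_filter_not univ (fun i => lam < R i)
        (fun i => p i * max (R i - lam) 0)]
      have h1 : ∑ i ∈ univ.filter (fun i => lam < R i), p i * max (R i - lam) 0
          = ∑ i ∈ A, (p i * R i) - lam * a := by
        rw [ha, mul_sum, ← sum_sub_distrib]
        apply sum_congr rfl
        intro i hi
        rw [mem_filter] at hi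
        rw [max_eq_left (by linarith [hi.2])]
        ring
      have h2 : ∑ i ∈ univ.filter (fun i => ¬ lam < R i), p i * max (R i - lam) 0 = 0 := by
        apply sum_eq_zero
        intro i hi
        rw [mem_filter] at hi
        rw [max_eq_right (by linarith [not_lt.mp hi.2])]
        ring
      rw [h1, h2, add_zero]
    have hkey : ∑ i, w i * p i * R i = (1/κ) * ∑ i ∈ A, (p i * R i) + c * (lam * b) := by
      have := key (fun i => p i * R i)
      simp only [← mul_assoc] at this
      rw [this]
      congr 1
      rw [mul_comm lam b, hb, sum_mul]
      congr 1
      apply sum_congr rfl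
      intro i hi
      rw [hB, mem_filter] at hi
      rw [hi.2]
    have h5 : c * (lam * b) = lam * ((κ - a) / κ) := by
      rw [show c * (lam * b) = lam * (c * b) by ring, hcb]
    rw [hkey, hmax, h5]
    have hκne : κ ≠ 0 := ne_of_gt hκ0
    field_simp
    ring
end

section
/- For a real random variable R on a finite probability space and κ ∈ (0,1], strong duality holds: max { E_Q[R] : dQ/dP ≤ 1/κ, Q a probability measure } = min_{ν ∈ ℝ} { ν + (1/κ)·E_P[(R - ν)₊] }, where (x)₊ = max(x, 0). -/
open Finset

/-- Weak duality: any primal-feasible `v` is dominated by any dual point `ν'`. -/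
lemma optimistic_cvar_weak_duality {n : ℕ}
    (p R : Fin n → ℝ) (hp : ∀ i, 0 < p i)
    (κ : ℝ) (hκ0 : 0 < κ)
    (v : Fin n → ℝ) (hv : ∀ i, 0 ≤ v i ∧ v i ≤ 1 / κ) (hvs : ∑ i, v i * p i = 1)
    (ν' : ℝ) :
    ∑ i, v i * p i * R i ≤ ν' + (1 / κ) * ∑ i, p i * max (R i - ν') 0 := by
  have key : ∀ i ∈ univ, v i * p i * R i
      ≤ (1/κ) * (p i * max (R i - ν') 0) + ν' * (v i * p i) := by
    intro i _
    have h0 : 0 ≤ v i * p i := mul_nonneg (hv i).1 (hp i).le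
    have hm : R i - ν' ≤ max (R i - ν') 0 := le_max_left _ _
    have hm0 : (0:ℝ) ≤ max (R i - ν') 0 := le_max_right _ _
    have h1 : v i * p i * (R i - ν') ≤ v i * p i * max (R i - ν') 0 :=
      mul_le_mul_of_nonneg_left hm h0
    have h2 : v i * p i * max (R i - ν') 0 ≤ (1/κ) * p i * max (R i - ν') 0 := by
      apply mul_le_mul_of_nonneg_right _ hm0
      exact mul_le_mul_of_nonneg_right ((hv i).2) (hp i).le
    have hr : v i * p i * R i = v i * p i * (R i - ν') + ν' * (v i * p i) := by ring
    have h2' : v i * p i * max (R i - ν') 0 ≤ (1/κ) * (p i * max (R i - ν') 0) := by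
      linarith [h2, (by ring : (1/κ) * p i * max (R i - ν') 0 = (1/κ) * (p i * max (R i - ν') 0))]
    linarith
  calc ∑ i, v i * p i * R i
      ≤ ∑ i, ((1/κ) * (p i * max (R i - ν') 0) + ν' * (v i * p i)) :=
        Finset.sum_le_sum key
    _ = (1/κ) * ∑ i, p i * max (R i - ν') 0 + ν' * ∑ i, v i * p i := by
        rw [Finset.sum_add_distrib, Finset.mul_sum, Finset.mul_sum]
    _ = ν' + (1/κ) * ∑ i, p i * max (R i - ν') 0 := by rw [hvs]; ring

/-- strong duality for optimistic CVaR on a finite probability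
space:
`max { E_Q[R] : dQ/dP ≤ 1/κ } = min_ν { ν + (1/κ)·E_P[(R - ν)₊] }`.
We express it by exhibiting a primal-feasible `w` and a dual point `ν` with
equal values, each optimal for its own problem. -/
theorem optimistic_cvar_strong_duality {n : ℕ}
    (p R : Fin n → ℝ) (hp : ∀ i, 0 < p i) (hsum : ∑ i, p i = 1)
    (κ : ℝ) (hκ0 : 0 < κ) (hκ1 : κ ≤ 1) :
    ∃ (w : Fin n → ℝ) (ν : ℝ),
      (∀ i, 0 ≤ w i ∧ w i ≤ 1 / κ) ∧ (∑ i, w i * p i = 1) ∧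
      (∀ v : Fin n → ℝ, (∀ i, 0 ≤ v i ∧ v i ≤ 1 / κ) → (∑ i, v i * p i = 1) →
        ∑ i, v i * p i * R i ≤ ∑ i, w i * p i * R i) ∧
      (∑ i, w i * p i * R i = ν + (1 / κ) * ∑ i, p i * max (R i - ν) 0) ∧
      (∀ ν' : ℝ,
        ν + (1 / κ) * ∑ i, p i * max (R i - ν) 0
          ≤ ν' + (1 / κ) * ∑ i, p i * max (R i - ν') 0) := by
  -- the index type is nonempty
  have hne : (univ : Finset (Fin n)).Nonempty := by
    by_contra h
    rw [Finset.not_nonempty_iff_eq_empty] at h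
    rw [h] at hsum
    simp at hsum
  obtain ⟨i₀, _, hi₀⟩ := Finset.exists_min_image univ R hne
  -- the set of candidate quantile levels
  set S : Finset (Fin n) :=
    univ.filter (fun i => κ ≤ ∑ j ∈ univ.filter (fun j => R i ≤ R j), p j) with hS
  have hi₀S : i₀ ∈ S := by
    rw [hS, mem_filter]
    refine ⟨mem_univ _, ?_⟩
    have hfil : univ.filter (fun j => R i₀ ≤ R j) = univ := by
      apply Finset.filter_true_of_mem
      intro j hj; exact hi₀ j hj
    rw [hfil, hsum]; exact hκ1
  obtain ⟨istar, hiS, hmax⟩ := Finset.exists_max_image S R ⟨i₀, hi₀S⟩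
  set ν := R istar with hν
  set A := ∑ i, (if ν < R i then p i else 0) with hA
  set B := ∑ i, (if R i = ν then p i else 0) with hB
  have hBpos : 0 < B := by
    rw [hB]
    apply Finset.sum_pos'
    · intro i _; split_ifs
      · exact (hp i).le
      · exact le_refl 0
    · exact ⟨istar, mem_univ _, by simp [hν, hp istar]⟩
  have hAB : κ ≤ A + B := by
    have h1 : κ ≤ ∑ j ∈ univ.filter (fun j => R istar ≤ R j), p j :=
      (Finset.mem_filter.mp hiS).2
    have h2 : ∑ j ∈ univ.filter (fun j => R istar ≤ R j), p j
        = ∑ j, (if ν ≤ R j then p j else 0) := Finset.sum_filter _ _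
    have h3 : ∑ j, (if ν ≤ R j then p j else 0)
        = ∑ j, ((if ν < R j then p j else 0) + (if R j = ν then p j else 0)) := by
      apply Finset.sum_congr rfl
      intro j _
      rcases lt_trichotomy ν (R j) with h | h | h
      · rw [if_pos h.le, if_pos h, if_neg h.ne']; ring
      · rw [if_pos h.le, if_neg (by rw [← h]; exact lt_irrefl ν), if_pos h.symm]; ring
      · rw [if_neg (not_le.mpr h), if_neg (by exact fun h' => absurd h' (not_lt.mpr h.le)),
          if_neg h.ne]; ring
    rw [h2, h3, Finset.sum_add_distrib] at h1
    exact h1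
  have hAκ : A < κ := by
    by_cases hne' : (univ.filter (fun j => ν < R j)).Nonempty
    · obtain ⟨j', hj', hjmin⟩ := Finset.exists_min_image _ R hne'
      have hj'ν : ν < R j' := (Finset.mem_filter.mp hj').2
      have heqf : univ.filter (fun j => R j' ≤ R j) = univ.filter (fun j => ν < R j) := by
        ext j
        simp only [Finset.mem_filter, Finset.mem_univ, true_and]
        constructor
        · intro h; exact lt_of_lt_of_le hj'ν h
        · intro h; exact hjmin j (Finset.mem_filter.mpr ⟨mem_univ _, h⟩)
      by_contra hcon
      push_neg at hcon
      have hj'S : j' ∈ S := by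
        rw [hS, Finset.mem_filter]
        refine ⟨mem_univ _, ?_⟩
        rw [heqf, Finset.sum_filter]
        exact hcon
      have := hmax j' hj'S
      exact absurd this (not_le.mpr hj'ν)
    · have hA0 : A = 0 := by
        rw [hA]
        apply Finset.sum_eq_zero
        intro i _
        rw [if_neg]
        intro h
        exact hne' ⟨i, Finset.mem_filter.mpr ⟨mem_univ _, h⟩⟩
      rw [hA0]; exact hκ0
  have hκne : κ ≠ 0 := ne_of_gt hκ0
  have hBne : B ≠ 0 := ne_of_gt hBpos
  set c : ℝ := (κ - A) / (κ * B) with hc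
  set w : Fin n → ℝ := fun i => if ν < R i then 1/κ else if R i = ν then c else 0 with hw
  -- feasibility
  have hfeas : ∀ i, 0 ≤ w i ∧ w i ≤ 1 / κ := by
    intro i
    have hc0 : 0 ≤ c := div_nonneg (by linarith) (by positivity)
    have hc1 : c ≤ 1 / κ := by
      rw [hc, div_le_div_iff₀ (by positivity) hκ0]
      nlinarith [mul_nonneg hκ0.le (by linarith : (0:ℝ) ≤ A + B - κ)]
    rw [hw]
    constructor <;> simp only
    · split_ifs
      · positivity
      · exact hc0
      · exact le_refl 0
    · split_ifs
      · exact le_refl _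
      · exact hc1
      · positivity
  -- the sum is one
  have hwsum : ∑ i, w i * p i = 1 := by
    have hpt : ∀ i ∈ univ, w i * p i
        = (1/κ) * (if ν < R i then p i else 0) + c * (if R i = ν then p i else 0) := by
      intro i _
      rw [hw]
      simp only
      rcases lt_trichotomy ν (R i) with h | h | h
      · rw [if_pos h, if_pos h, if_neg h.ne']; ring
      · rw [if_neg (by rw [← h]; exact lt_irrefl ν), if_pos h.symm,
          if_neg (by rw [← h]; exact lt_irrefl ν), if_pos h.symm]; ring
      · rw [if_neg (not_lt.mpr h.le), if_neg h.ne, if_neg (not_lt.mpr h.le), if_neg h.ne]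
        ring
    rw [Finset.sum_congr rfl hpt, Finset.sum_add_distrib, ← Finset.mul_sum, ← Finset.mul_sum,
      ← hA, ← hB, hc]
    field_simp
    ring
  -- equality of primal and dual values
  set T := ∑ i, (if ν < R i then p i * R i else 0) with hT
  have hLHS : ∑ i, w i * p i * R i = (1/κ) * T + (c * ν) * B := by
    have hpt : ∀ i ∈ univ, w i * p i * R i
        = (1/κ) * (if ν < R i then p i * R i else 0)
          + (c * ν) * (if R i = ν then p i else 0) := by
      intro i _
      rw [hw]
      simp only
      rcases lt_trichotomy ν (R i) with h | h | h
      · rw [if_pos h, if_pos h, if_neg h.ne']; ring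
      · rw [if_neg (by rw [← h]; exact lt_irrefl ν), if_pos h.symm,
          if_neg (by rw [← h]; exact lt_irrefl ν), if_pos h.symm, h.symm]; ring
      · rw [if_neg (not_lt.mpr h.le), if_neg h.ne, if_neg (not_lt.mpr h.le), if_neg h.ne]
        ring
    rw [Finset.sum_congr rfl hpt, Finset.sum_add_distrib, ← Finset.mul_sum, ← Finset.mul_sum,
      ← hT, ← hB]
  have hRHS : ∑ i, p i * max (R i - ν) 0 = T - ν * A := by
    have hpt : ∀ i ∈ univ, p i * max (R i - ν) 0
        = (if ν < R i then p i * R i else 0) - ν * (if ν < R i then p i else 0) := by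
      intro i _
      by_cases h : ν < R i
      · rw [if_pos h, if_pos h, max_eq_left (by linarith)]; ring
      · rw [if_neg h, if_neg h, max_eq_right (by push_neg at h; linarith)]; ring
    rw [Finset.sum_congr rfl hpt, Finset.sum_sub_distrib, ← Finset.mul_sum, ← hT, ← hA]
  have heqv : ∑ i, w i * p i * R i = ν + (1 / κ) * ∑ i, p i * max (R i - ν) 0 := by
    rw [hLHS, hRHS, hc]
    field_simp
    ring
  refine ⟨w, ν, hfeas, hwsum, ?_, heqv, ?_⟩
  · intro v hv hvs
    calc ∑ i, v i * p i * R i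
        ≤ ν + (1 / κ) * ∑ i, p i * max (R i - ν) 0 :=
          optimistic_cvar_weak_duality p R hp κ hκ0 v hv hvs ν
      _ = ∑ i, w i * p i * R i := heqv.symm
  · intro ν'
    calc ν + (1 / κ) * ∑ i, p i * max (R i - ν) 0
        = ∑ i, w i * p i * R i := heqv.symm
      _ ≤ ν' + (1 / κ) * ∑ i, p i * max (R i - ν') 0 :=
          optimistic_cvar_weak_duality p R hp κ hκ0 w hfeas hwsum ν'
end

section
/- Let R be a real random variable on a finite probability space and κ ∈ (0,1]. The function g(ν) = ν + (1/κ)·E[(R - ν)₊] is convex in ν, and is minimized at any ν* satisfying P(R ≥ ν*) ≥ κ and P(R ≤ ν*) ≥ 1 - κ (i.e., at the (1-κ)-quantile of R). -/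
open Finset

/-- on a finite probability space, the dual objective
`g(ν) = ν + (1/κ)·E[(R - ν)₊]` is convex in `ν`, and any `ν*` with
`P(R ≥ ν*) ≥ κ` and `P(R ≤ ν*) ≥ 1 - κ` (a `(1-κ)`-quantile) is a minimizer. -/
theorem cvar_dual_convex_and_quantile_minimizer {n : ℕ}
    (p R : Fin n → ℝ) (hp : ∀ i, 0 < p i) (hsum : ∑ i, p i = 1)
    (κ : ℝ) (hκ0 : 0 < κ) (hκ1 : κ ≤ 1) :
    ConvexOn ℝ Set.univ
      (fun ν : ℝ => ν + (1/κ) * ∑ i, p i * max (R i - ν) 0) ∧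
    ∀ νstar : ℝ,
      κ ≤ ∑ i ∈ Finset.univ.filter (fun i => νstar ≤ R i), p i →
      1 - κ ≤ ∑ i ∈ Finset.univ.filter (fun i => R i ≤ νstar), p i →
      ∀ ν : ℝ,
        νstar + (1/κ) * ∑ i, p i * max (R i - νstar) 0
          ≤ ν + (1/κ) * ∑ i, p i * max (R i - ν) 0 := by
  have hκ' : (0:ℝ) < 1/κ := by positivity
  constructor
  · refine ⟨convex_univ, ?_⟩
    intro x _ y _ a b ha hb hab
    simp only [smul_eq_mul]
    have hterm : ∀ i : Fin n,
        p i * max (R i - (a * x + b * y)) 0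
          ≤ a * (p i * max (R i - x) 0) + b * (p i * max (R i - y) 0) := by
      intro i
      have hmax : max (R i - (a * x + b * y)) 0
          ≤ a * max (R i - x) 0 + b * max (R i - y) 0 := by
        apply max_le
        · have hx : R i - (a * x + b * y) = a * (R i - x) + b * (R i - y) := by
            linear_combination (-(R i)) * hab
          rw [hx]
          exact add_le_add (mul_le_mul_of_nonneg_left (le_max_left _ _) ha)
            (mul_le_mul_of_nonneg_left (le_max_left _ _) hb)
        · positivity
      nlinarith [mul_le_mul_of_nonneg_left hmax (hp i).le]
    have hsumle : ∑ i, p i * max (R i - (a * x + b * y)) 0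
        ≤ ∑ i, (a * (p i * max (R i - x) 0) + b * (p i * max (R i - y) 0)) :=
      Finset.sum_le_sum fun i _ => hterm i
    rw [Finset.sum_add_distrib, ← Finset.mul_sum, ← Finset.mul_sum] at hsumle
    nlinarith [mul_le_mul_of_nonneg_left hsumle hκ'.le]
  · intro νstar hge hle ν
    have key : ∑ i, p i * max (R i - νstar) 0 - ∑ i, p i * max (R i - ν) 0
        ≤ κ * (ν - νstar) := by
      rw [← Finset.sum_sub_distrib]
      rcases le_total νstar ν with h | h
      · have hP : ∑ i ∈ Finset.univ.filter (fun i => νstar < R i), p i ≤ κ := by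
          have h2 := Finset.sum_filter_add_sum_filter_not Finset.univ
            (fun i => R i ≤ νstar) p
          have h3 : Finset.univ.filter (fun i => ¬ R i ≤ νstar)
              = Finset.univ.filter (fun i => νstar < R i) := by
            simp [not_le]
          rw [h3, hsum] at h2
          linarith
        calc ∑ i, (p i * max (R i - νstar) 0 - p i * max (R i - ν) 0)
            ≤ ∑ i, (if νstar < R i then p i * (ν - νstar) else 0) := by
              apply Finset.sum_le_sum
              intro i _
              by_cases hc : νstar < R i
              · rw [if_pos hc]
                have h1 : max (R i - νstar) 0 = R i - νstar :=
                  max_eq_left (by linarith)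
                have h2 : R i - ν ≤ max (R i - ν) 0 := le_max_left _ _
                rw [h1]
                nlinarith [mul_le_mul_of_nonneg_left h2 (hp i).le]
              · rw [if_neg hc]
                push_neg at hc
                have h1 : max (R i - νstar) 0 = 0 := max_eq_right (by linarith)
                have h2 : (0:ℝ) ≤ max (R i - ν) 0 := le_max_right _ _
                rw [h1]
                nlinarith [mul_le_mul_of_nonneg_left h2 (hp i).le]
          _ = ∑ i ∈ Finset.univ.filter (fun i => νstar < R i), p i * (ν - νstar) :=
              (Finset.sum_filter _ _).symm
          _ = (∑ i ∈ Finset.univ.filter (fun i => νstar < R i), p i) * (ν - νstar) := by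
              rw [Finset.sum_mul]
          _ ≤ κ * (ν - νstar) :=
              mul_le_mul_of_nonneg_right hP (by linarith)
      · calc ∑ i, (p i * max (R i - νstar) 0 - p i * max (R i - ν) 0)
            ≤ ∑ i, (if νstar ≤ R i then p i * (ν - νstar) else 0) := by
              apply Finset.sum_le_sum
              intro i _
              by_cases hc : νstar ≤ R i
              · rw [if_pos hc]
                have h1 : max (R i - νstar) 0 = R i - νstar :=
                  max_eq_left (by linarith)
                have h2 : max (R i - ν) 0 = R i - ν := max_eq_left (by linarith)
                rw [h1, h2]
                nlinarith [hp i]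
              · rw [if_neg hc]
                push_neg at hc
                have h1 : max (R i - νstar) 0 = 0 := max_eq_right (by linarith)
                have h2 : (0:ℝ) ≤ max (R i - ν) 0 := le_max_right _ _
                rw [h1]
                nlinarith [mul_le_mul_of_nonneg_left h2 (hp i).le]
          _ = ∑ i ∈ Finset.univ.filter (fun i => νstar ≤ R i), p i * (ν - νstar) :=
              (Finset.sum_filter _ _).symm
          _ = (∑ i ∈ Finset.univ.filter (fun i => νstar ≤ R i), p i) * (ν - νstar) := by
              rw [Finset.sum_mul]
          _ ≤ κ * (ν - νstar) :=
              mul_le_mul_of_nonpos_right hge (by linarith)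
    have h2 : (1/κ) * (∑ i, p i * max (R i - νstar) 0)
        - (1/κ) * (∑ i, p i * max (R i - ν) 0) ≤ ν - νstar := by
      calc (1/κ) * (∑ i, p i * max (R i - νstar) 0)
            - (1/κ) * (∑ i, p i * max (R i - ν) 0)
          = (1/κ) * (∑ i, p i * max (R i - νstar) 0
              - ∑ i, p i * max (R i - ν) 0) := by ring
        _ ≤ (1/κ) * (κ * (ν - νstar)) := mul_le_mul_of_nonneg_left key hκ'.le
        _ = ν - νstar := by field_simp
    linarith
end
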